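/- Let P, Q ⊆ ℝ^d be disjoint finite sets with 0 ∈ conv(P) and 0 ∈ conv(Q), and suppose that P is in general position. Let k be an integer with 2 ≤ k ≤ |P|. Then there exists a set C ⊆ P ∪ Q with 0 ∈ conv(C), |C ∩ P| ≤ |P| − ⌊|P|/k⌋, and |C ∩ Q| ≤ d − k + 2. (Applied with |P| = d+1 and k = Θ(√d), this yields a (d − Θ(√d))-colorful choice containing the origin in its convex hull for two color classes.) -/

import Mathlib

open scoped Classical

/-- A finite set `P ⊆ ℝ^d` is in *general position* if for every `k ≤ d` no
`k + 2` of its points lie in a `k`-dimensional affine subspace, and no proper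
subset of `P` contains the origin in its convex hull. -/
def GenPos {d : ℕ} (P : Finset (EuclideanSpace ℝ (Fin d))) : Prop :=
  (∀ k : ℕ, k ≤ d → ∀ S ⊆ P, S.card = k + 2 →
    ¬ ∃ A : AffineSubspace ℝ (EuclideanSpace ℝ (Fin d)),
        Module.finrank ℝ A.direction = k ∧
        (S : Set (EuclideanSpace ℝ (Fin d))) ⊆ (A : Set (EuclideanSpace ℝ (Fin d)))) ∧
  (∀ S ⊂ P, (0 : EuclideanSpace ℝ (Fin d)) ∉
    convexHull ℝ (S : Set (EuclideanSpace ℝ (Fin d))))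

/-- If nonnegative weights with positive total sum combine points of `s` to `0`,
then `0` lies in the convex hull of `s`. -/
lemma zero_mem_convexHull_of_sum {E : Type*} [AddCommGroup E] [Module ℝ E]
    (s : Finset E) (w : E → ℝ) (h0 : ∀ x ∈ s, 0 ≤ w x)
    (hpos : 0 < ∑ x ∈ s, w x) (hsum : ∑ x ∈ s, w x • x = 0) :
    (0 : E) ∈ convexHull ℝ (↑s : Set E) := by
  have h := Finset.centerMass_mem_convexHull s h0 hpos
    (z := id) (fun i hi => Finset.mem_coe.mpr hi)
  rwa [Finset.centerMass, show ∑ x ∈ s, w x • id x = (0:E) from hsum, smul_zero] at h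

/-- Two color classes: if `P, Q ⊆ ℝ^d` are disjoint finite sets containing the
origin in their convex hulls, `P` is in general position, and `2 ≤ k ≤ |P|`,
then there is a set `C ⊆ P ∪ Q` with `0 ∈ conv C`, at most `|P| - ⌊|P|/k⌋`
points of `P`, and at most `d - k + 2` points of `Q`. -/
theorem two_color_classes (d : ℕ) (P Q : Finset (EuclideanSpace ℝ (Fin d)))
    (hPQ : Disjoint P Q) (hgp : GenPos P)
    (h0P : (0 : EuclideanSpace ℝ (Fin d)) ∈
      convexHull ℝ ((P : Set (EuclideanSpace ℝ (Fin d)))))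
    (h0Q : (0 : EuclideanSpace ℝ (Fin d)) ∈
      convexHull ℝ ((Q : Set (EuclideanSpace ℝ (Fin d)))))
    (k : ℕ) (hk₁ : 2 ≤ k) (hk₂ : k ≤ P.card) :
    ∃ C : Finset (EuclideanSpace ℝ (Fin d)),
      C ⊆ P ∪ Q ∧
      (0 : EuclideanSpace ℝ (Fin d)) ∈
        convexHull ℝ ((C : Set (EuclideanSpace ℝ (Fin d)))) ∧
      (C ∩ P).card ≤ P.card - P.card / k ∧
      (C ∩ Q).card ≤ d + 2 - k := by
  classical
  obtain ⟨-, hgp2⟩ := hgp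
  have hk0 : 0 < k := by omega
  set n := P.card with hn
  -- Step 1 : P is affinely independent
  have hPai : AffineIndependent ℝ ((↑) : ↥P → EuclideanSpace ℝ (Fin d)) := by
    have h0P' := h0P
    rw [convexHull_eq_union] at h0P'
    simp only [Set.mem_iUnion] at h0P'
    obtain ⟨t, hts, hai, h0t⟩ := h0P'
    have htP : t ⊆ P := Finset.coe_subset.mp hts
    have hteq : t = P := by
      by_contra hne
      exact hgp2 t (lt_of_le_of_ne htP hne) h0t
    exact hteq ▸ hai
  -- Step 2 : positive weights for 0 on P
  rw [Finset.convexHull_eq] at h0P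
  obtain ⟨w, hw0, hw1, hwc⟩ := h0P
  have hws : ∑ x ∈ P, w x • x = 0 := by
    have := Finset.centerMass_eq_of_sum_1 P id hw1
    rw [hwc] at this
    simpa using this.symm
  have hwpos : ∀ p ∈ P, 0 < w p := by
    intro p hp
    rcases (hw0 p hp).lt_or_eq with h | h
    · exact h
    · exfalso
      apply hgp2 (P.erase p) (Finset.erase_ssubset hp)
      apply zero_mem_convexHull_of_sum _ w
        (fun x hx => hw0 x (Finset.mem_of_mem_erase hx))
      · rw [Finset.sum_erase_eq_sub hp, hw1, ← h]
        norm_num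
      · rw [Finset.sum_erase_eq_sub hp, hws, ← h, zero_smul, sub_zero]
  -- Step 3 : partition of P into k blocks of size ≥ n / k
  let e := P.equivFin
  let g : EuclideanSpace ℝ (Fin d) → Fin k := fun x =>
    if h : x ∈ P then ⟨(e ⟨x, h⟩ : Fin n).1 % k, Nat.mod_lt _ hk0⟩ else ⟨0, hk0⟩
  let B : Fin k → Finset (EuclideanSpace ℝ (Fin d)) := fun i => P.filter (fun x => g x = i)
  have hBsub : ∀ i, B i ⊆ P := fun i => Finset.filter_subset _ _
  have hBcard : ∀ i, n / k ≤ (B i).card := by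
    intro i
    have hlt : ∀ t : Fin (n / k), t.1 * k + i.1 < n := by
      intro t
      have h1 : (t.1 + 1) * k ≤ (n / k) * k := Nat.mul_le_mul_right k t.2
      have h2 : n / k * k ≤ n := Nat.div_mul_le_self n k
      have h3 : i.1 < k := i.2
      calc t.1 * k + i.1 < t.1 * k + k := by omega
        _ = (t.1 + 1) * k := by ring
        _ ≤ n := le_trans h1 h2
    let φ : Fin (n / k) → EuclideanSpace ℝ (Fin d) := fun t =>
      (e.symm ⟨t.1 * k + i.1, hlt t⟩ : ↥P).1
    have hφmem : ∀ t ∈ (Finset.univ : Finset (Fin (n / k))), φ t ∈ B i := by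
      intro t _
      have hmem : φ t ∈ P := (e.symm ⟨t.1 * k + i.1, hlt t⟩).2
      refine Finset.mem_filter.mpr ⟨hmem, ?_⟩
      show g (φ t) = i
      have hdef : g (φ t) = ⟨(e ⟨φ t, hmem⟩ : Fin n).1 % k, Nat.mod_lt _ hk0⟩ := dif_pos hmem
      rw [hdef]
      have hsub : (⟨φ t, hmem⟩ : ↥P) = e.symm ⟨t.1 * k + i.1, hlt t⟩ := Subtype.ext rfl
      rw [hsub, Equiv.apply_symm_apply]
      apply Fin.ext
      show (t.1 * k + i.1) % k = i.1
      rw [add_comm, Nat.add_mul_mod_self_right, Nat.mod_eq_of_lt i.2]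
    have hφinj : Set.InjOn φ (Finset.univ : Finset (Fin (n / k))) := by
      intro t1 _ t2 _ h
      have h' : e.symm ⟨t1.1 * k + i.1, hlt t1⟩ = e.symm ⟨t2.1 * k + i.1, hlt t2⟩ :=
        Subtype.coe_injective h
      have h'' := e.symm.injective h'
      have h3 : t1.1 * k + i.1 = t2.1 * k + i.1 := congrArg Fin.val h''
      have h4 : t1.1 = t2.1 := by
        have h5 := Nat.add_right_cancel h3
        exact Nat.eq_of_mul_eq_mul_right hk0 h5
      exact Fin.ext h4
    have := Finset.card_le_card_of_injOn φ hφmem hφinj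
    simpa using this
  have hBne : ∀ i, ∃ x, x ∈ B i := by
    intro i
    have h1 : 1 ≤ n / k := (Nat.one_le_div_iff hk0).mpr hk₂
    have h2 := lt_of_lt_of_le (by omega : 0 < n / k) (hBcard i)
    obtain ⟨x, hx⟩ := Finset.card_pos.mp h2
    exact ⟨x, hx⟩
  -- Step 4 : block sums and their span
  set a : Fin k → EuclideanSpace ℝ (Fin d) := fun i => ∑ x ∈ B i, w x • x with ha
  have hasum : ∑ i, a i = 0 := by
    have := Finset.sum_fiberwise_of_maps_to
      (fun x (_ : x ∈ P) => Finset.mem_univ (g x)) (fun x => w x • x)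
    rw [← hws]
    exact this
  have hcomb : ∀ c : Fin k → ℝ, ∑ i, c i • a i = ∑ x ∈ P, (c (g x) * w x) • x := by
    intro c
    rw [← Finset.sum_fiberwise_of_maps_to
      (fun x (_ : x ∈ P) => Finset.mem_univ (g x)) (fun x => (c (g x) * w x) • x)]
    refine Finset.sum_congr rfl (fun i _ => ?_)
    rw [ha, Finset.smul_sum]
    refine Finset.sum_congr rfl (fun x hx => ?_)
    have hgx : g x = i := (Finset.mem_filter.mp hx).2
    rw [hgx, mul_smul]
  have hconst : ∀ c : Fin k → ℝ, (∑ i, c i • a i) = 0 → ∃ s0 : ℝ, ∀ i, c i = s0 := by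
    intro c hc
    rw [hcomb] at hc
    refine ⟨∑ x ∈ P, c (g x) * w x, ?_⟩
    set s0 : ℝ := ∑ x ∈ P, c (g x) * w x with hs0
    have key : ∀ p ∈ P, c (g p) * w p - s0 * w p = 0 := by
      have h1 : ∑ p : ↥P, (c (g ↑p) * w ↑p - s0 * w ↑p) = 0 := by
        rw [Finset.sum_sub_distrib, Finset.sum_coe_sort P (fun x => c (g x) * w x),
          ← Finset.mul_sum, Finset.sum_coe_sort P w, hw1, mul_one, ← hs0, sub_self]
      have e2 : ∑ p : ↥P, (s0 * w ↑p) • (↑p : EuclideanSpace ℝ (Fin d)) = 0 := by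
        rw [Finset.sum_coe_sort P (fun x => (s0 * w x) • x)]
        simp_rw [mul_smul]
        rw [← Finset.smul_sum, hws, smul_zero]
      have e1 : ∑ p : ↥P, (c (g ↑p) * w ↑p) • (↑p : EuclideanSpace ℝ (Fin d)) = 0 := by
        rw [Finset.sum_coe_sort P (fun x => (c (g x) * w x) • x)]; exact hc
      have h2 : ∑ p : ↥P, (c (g ↑p) * w ↑p - s0 * w ↑p) • (↑p : EuclideanSpace ℝ (Fin d)) = 0 := by
        simp_rw [sub_smul]
        rw [Finset.sum_sub_distrib, e1, e2, sub_zero]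
      have hall := affineIndependent_iff.mp hPai Finset.univ
        (fun p => c (g ↑p) * w ↑p - s0 * w ↑p) (by simpa using h1) (by simpa using h2)
      intro p hp
      exact hall ⟨p, hp⟩ (Finset.mem_univ _)
    intro i
    obtain ⟨x, hx⟩ := hBne i
    have hxP : x ∈ P := hBsub i hx
    have hgx : g x = i := (Finset.mem_filter.mp hx).2
    have hkey := key x hxP
    have hwx := hwpos x hxP
    rw [hgx] at hkey
    have hz : (c i - s0) * w x = 0 := by ring_nf; ring_nf at hkey; linarith
    rcases mul_eq_zero.mp hz with h | h
    · linarith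
    · exact absurd h (ne_of_gt hwx)
  -- Step 5 : the span Z of the block sums has dimension k - 1
  set Z : Submodule ℝ (EuclideanSpace ℝ (Fin d)) :=
    Submodule.span ℝ (Set.range a) with hZ
  let L : (Fin k → ℝ) →ₗ[ℝ] EuclideanSpace ℝ (Fin d) :=
    { toFun := fun c => ∑ i, c i • a i
      map_add' := by
        intro c1 c2
        simp [add_smul, Finset.sum_add_distrib]
      map_smul' := by
        intro m c
        simp [smul_smul, Finset.smul_sum] }
  have hrange : LinearMap.range L = Z := by
    apply le_antisymm
    · rintro x ⟨c, rfl⟩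
      show ∑ i, c i • a i ∈ Z
      exact Submodule.sum_mem _
        (fun i _ => Submodule.smul_mem _ _ (Submodule.subset_span (Set.mem_range_self i)))
    · rw [hZ, Submodule.span_le]
      rintro x ⟨i, rfl⟩
      refine ⟨Pi.single i (1:ℝ), ?_⟩
      have hL : L (Pi.single i (1:ℝ)) = ∑ j, (Pi.single i (1:ℝ) : Fin k → ℝ) j • a j := rfl
      rw [hL, Finset.sum_eq_single i]
      · simp
      · intro j _ hj
        simp [Pi.single_apply, hj]
      · intro h
        exact absurd (Finset.mem_univ i) h
  have hker : LinearMap.ker L = Submodule.span ℝ {(fun _ => 1 : Fin k → ℝ)} := by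
    ext c
    simp only [LinearMap.mem_ker, Submodule.mem_span_singleton]
    constructor
    · intro hc
      obtain ⟨s0, hs⟩ := hconst c hc
      exact ⟨s0, funext fun i => by simp [hs i]⟩
    · rintro ⟨s0, rfl⟩
      show ∑ i, (s0 • fun _ => (1:ℝ)) i • a i = 0
      simp only [Pi.smul_apply, smul_eq_mul, mul_one]
      rw [← Finset.smul_sum, hasum, smul_zero]
  have hone : (fun _ => (1:ℝ) : Fin k → ℝ) ≠ 0 :=
    fun h => one_ne_zero (congrFun h ⟨0, hk0⟩)
  have hfinZ : Module.finrank ℝ Z = k - 1 := by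
    have h1 := LinearMap.finrank_range_add_finrank_ker L
    rw [hrange, hker, finrank_span_singleton hone, Module.finrank_fin_fun] at h1
    omega
  -- Step 6 : Caratheodory in the quotient by Z
  set π := Z.mkQ with hπ
  have hfinE : Module.finrank ℝ (EuclideanSpace ℝ (Fin d)) = d := by
    simp [finrank_euclideanSpace]
  have hquot : Module.finrank ℝ (EuclideanSpace ℝ (Fin d) ⧸ Z) + (k - 1) = d := by
    have h := Z.finrank_quotient_add_finrank
    rw [hfinZ, hfinE] at h
    exact h
  have h0Q' : (0 : EuclideanSpace ℝ (Fin d) ⧸ Z) ∈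
      convexHull ℝ (π '' (↑Q : Set (EuclideanSpace ℝ (Fin d)))) := by
    rw [← LinearMap.image_convexHull]
    exact ⟨0, h0Q, map_zero π⟩
  rw [convexHull_eq_union] at h0Q'
  simp only [Set.mem_iUnion] at h0Q'
  obtain ⟨T, hTsub, hTai, h0T⟩ := h0Q'
  have hTne : T.Nonempty := by
    rcases T.eq_empty_or_nonempty with h | h
    · rw [h] at h0T; simp at h0T
    · exact h
  have hTcard : T.card ≤ d + 2 - k := by
    have hc : Fintype.card ↥T = (T.card - 1) + 1 := by
      rw [Fintype.card_coe]
      have := Finset.card_pos.mpr hTne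
      omega
    have hvs := hTai.finrank_vectorSpan hc
    have hle : Module.finrank ℝ (vectorSpan ℝ (Set.range ((↑) : ↥T → EuclideanSpace ℝ (Fin d) ⧸ Z)))
        ≤ Module.finrank ℝ (EuclideanSpace ℝ (Fin d) ⧸ Z) := Submodule.finrank_le _
    rw [hvs] at hle
    have := Finset.card_pos.mpr hTne
    omega
  -- Step 7 : weights on T and lifts to Q
  rw [Finset.convexHull_eq] at h0T
  obtain ⟨γ, hγ0, hγ1, hγc⟩ := h0T
  have hγs : ∑ y ∈ T, γ y • y = 0 := by
    have := Finset.centerMass_eq_of_sum_1 T id hγ1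
    rw [hγc] at this
    simpa using this.symm
  let q : (EuclideanSpace ℝ (Fin d) ⧸ Z) → EuclideanSpace ℝ (Fin d) := fun y =>
    if h : y ∈ π '' (↑Q : Set (EuclideanSpace ℝ (Fin d))) then h.choose else 0
  have hq : ∀ y ∈ T, q y ∈ Q ∧ π (q y) = y := by
    intro y hy
    have h : y ∈ π '' (↑Q : Set (EuclideanSpace ℝ (Fin d))) := hTsub (Finset.mem_coe.mpr hy)
    have hqy : q y = h.choose := dif_pos h
    have hspec := h.choose_spec
    exact ⟨hqy ▸ hspec.1, hqy ▸ hspec.2⟩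
  set R := T.image q with hR
  have hRQ : R ⊆ Q := by
    intro x hx
    obtain ⟨y, hy, rfl⟩ := Finset.mem_image.mp hx
    exact (hq y hy).1
  set z : EuclideanSpace ℝ (Fin d) := ∑ y ∈ T, γ y • q y with hzdef
  have hzR : z ∈ convexHull ℝ (↑R : Set (EuclideanSpace ℝ (Fin d))) := by
    have h := Finset.centerMass_mem_convexHull T (fun y hy => hγ0 y hy)
      (by rw [hγ1]; norm_num) (z := q)
      (fun y hy => Finset.mem_coe.mpr (Finset.mem_image_of_mem q hy))
    rwa [Finset.centerMass, hγ1, inv_one, one_smul] at h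
  have hzZ : z ∈ Z := by
    have hπz : π z = 0 := by
      rw [hzdef, map_sum]
      have hcongr : ∀ y ∈ T, π (γ y • q y) = γ y • y := by
        intro y hy
        rw [map_smul, (hq y hy).2]
      rw [Finset.sum_congr rfl hcongr, hγs]
    rwa [← Submodule.ker_mkQ Z, LinearMap.mem_ker]
  -- Step 8 : coefficients of z and the max trick
  obtain ⟨c, hc⟩ := (Submodule.mem_span_range_iff_exists_fun ℝ).mp (hZ ▸ hzZ)
  obtain ⟨i0, -, hi0⟩ := Finset.exists_max_image Finset.univ c ⟨⟨0, hk0⟩, Finset.mem_univ _⟩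
  let lam : Fin k → ℝ := fun i => c i0 - c i
  have hlam0 : ∀ i, 0 ≤ lam i := fun i => sub_nonneg.mpr (hi0 i (Finset.mem_univ i))
  have hlami0 : lam i0 = 0 := sub_self _
  have hlamsum : ∑ x ∈ P, (lam (g x) * w x) • x = -z := by
    rw [← hcomb lam]
    have hsplit : ∑ i, lam i • a i = c i0 • ∑ i, a i - ∑ i, c i • a i := by
      rw [Finset.smul_sum, ← Finset.sum_sub_distrib]
      exact Finset.sum_congr rfl (fun i _ => by rw [sub_smul])
    rw [hsplit, hasum, smul_zero, hc, zero_sub]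
  have hPB : ∑ x ∈ P \ B i0, (lam (g x) * w x) • x = -z := by
    rw [← hlamsum]
    apply Finset.sum_subset (Finset.sdiff_subset)
    intro x hx hnx
    have hxB : x ∈ B i0 := by
      by_contra h
      exact hnx (Finset.mem_sdiff.mpr ⟨hx, h⟩)
    have hgx : g x = i0 := (Finset.mem_filter.mp hxB).2
    rw [hgx, hlami0, zero_mul, zero_smul]
  set s' : ℝ := ∑ x ∈ P \ B i0, lam (g x) * w x with hs'
  have hs'0 : 0 ≤ s' := Finset.sum_nonneg (fun x hx =>
    mul_nonneg (hlam0 _) (hw0 x (Finset.mem_sdiff.mp hx).1))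
  refine ⟨R ∪ (P \ B i0), ?_, ?_, ?_, ?_⟩
  · apply Finset.union_subset
    · exact hRQ.trans Finset.subset_union_right
    · exact (Finset.sdiff_subset).trans Finset.subset_union_left
  · have hRC : (↑R : Set (EuclideanSpace ℝ (Fin d))) ⊆ ↑(R ∪ (P \ B i0)) :=
      Finset.coe_subset.mpr Finset.subset_union_left
    have hPC : (↑(P \ B i0) : Set (EuclideanSpace ℝ (Fin d))) ⊆ ↑(R ∪ (P \ B i0)) :=
      Finset.coe_subset.mpr Finset.subset_union_right
    have hzC : z ∈ convexHull ℝ (↑(R ∪ (P \ B i0)) : Set (EuclideanSpace ℝ (Fin d))) :=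
      convexHull_mono hRC hzR
    rcases eq_or_lt_of_le hs'0 with h0 | h0
    · have hz0 : -z = 0 := by
        rw [← hPB]
        apply Finset.sum_eq_zero
        intro x hx
        have hx0 : lam (g x) * w x = 0 :=
          (Finset.sum_eq_zero_iff_of_nonneg (fun x hx =>
            mul_nonneg (hlam0 _) (hw0 x (Finset.mem_sdiff.mp hx).1))).mp h0.symm x hx
        rw [hx0, zero_smul]
      have hzz : z = 0 := by rwa [neg_eq_zero] at hz0
      rwa [hzz] at hzC
    · have hs'ne : s' ≠ 0 := ne_of_gt h0
      have hyC : (s'⁻¹ • (-z)) ∈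
          convexHull ℝ (↑(R ∪ (P \ B i0)) : Set (EuclideanSpace ℝ (Fin d))) := by
        apply convexHull_mono hPC
        have h := Finset.centerMass_mem_convexHull (P \ B i0)
          (w := fun x => lam (g x) * w x)
          (fun x hx => mul_nonneg (hlam0 _) (hw0 x (Finset.mem_sdiff.mp hx).1))
          (by rw [← hs']; exact h0) (z := id)
          (fun x hx => Finset.mem_coe.mpr hx)
        rwa [Finset.centerMass, ← hs',
          show ∑ x ∈ P \ B i0, (lam (g x) * w x) • id x = -z from hPB] at h
      have h1s : (0:ℝ) < 1 + s' := by linarith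
      have hdiv : s' / (1 + s') * s'⁻¹ = 1 / (1 + s') := by
        field_simp
      have key : (1 / (1 + s')) • z + (s' / (1 + s')) • (s'⁻¹ • (-z)) =
          (0 : EuclideanSpace ℝ (Fin d)) := by
        rw [smul_smul, hdiv, smul_neg]
        exact add_neg_cancel _
      have hab : 1 / (1 + s') + s' / (1 + s') = 1 := by
        rw [← add_div, div_self (ne_of_gt h1s)]
      have hmem := (convex_convexHull ℝ (↑(R ∪ (P \ B i0)) : Set (EuclideanSpace ℝ (Fin d))))
        hzC hyC (div_nonneg zero_le_one h1s.le) (div_nonneg hs'0 h1s.le) hab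
      rwa [key] at hmem
  · have hsub : (R ∪ (P \ B i0)) ∩ P ⊆ P \ B i0 := by
      intro x hx
      obtain ⟨hxC, hxP⟩ := Finset.mem_inter.mp hx
      rcases Finset.mem_union.mp hxC with h | h
      · exact absurd (hRQ h) (Finset.disjoint_left.mp hPQ hxP)
      · exact h
    calc ((R ∪ (P \ B i0)) ∩ P).card ≤ (P \ B i0).card := Finset.card_le_card hsub
      _ = n - (B i0).card := by rw [Finset.card_sdiff_of_subset (hBsub i0)]
      _ ≤ n - n / k := Nat.sub_le_sub_left (hBcard i0) n
  · have hsub : (R ∪ (P \ B i0)) ∩ Q ⊆ R := by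
      intro x hx
      obtain ⟨hxC, hxQ⟩ := Finset.mem_inter.mp hx
      rcases Finset.mem_union.mp hxC with h | h
      · exact h
      · exact absurd hxQ (Finset.disjoint_left.mp hPQ (Finset.mem_sdiff.mp h).1)
    calc ((R ∪ (P \ B i0)) ∩ Q).card ≤ R.card := Finset.card_le_card hsub
      _ ≤ T.card := Finset.card_image_le
      _ ≤ d + 2 - k := hTcard
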